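/- For any semistandard Young tableau T, the monomial of its column reading word is congruent to the monomial of its diagonal reading word modulo the ideal I_B: u_{colword(T)} ≡ u_{diagread(T)} mod I_B. -/

import Mathlib

open FreeAlgebra

/-- Generators of the ideal `I_B`. -/
def genB (N : ℕ) : Set (FreeAlgebra ℤ (Fin N)) :=
  {x | ∃ a b : Fin N, a < b ∧
      x = ι ℤ b * ι ℤ b * ι ℤ a + ι ℤ a * ι ℤ b * ι ℤ a
        - ι ℤ b * ι ℤ a * ι ℤ b - ι ℤ b * ι ℤ a * ι ℤ a} ∪
  {x | ∃ a b c : Fin N, a < b ∧ b < c ∧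
      x = ι ℤ b * ι ℤ c * ι ℤ a - ι ℤ b * ι ℤ a * ι ℤ c} ∪
  {x | ∃ a b c : Fin N, a < b ∧ b < c ∧
      x = ι ℤ a * ι ℤ c * ι ℤ b - ι ℤ c * ι ℤ a * ι ℤ b}

/-- The monomial `u_w` of a word `w`. -/
noncomputable def mon {N : ℕ} (w : List (Fin N)) : FreeAlgebra ℤ (Fin N) :=
  (w.map (ι ℤ)).prod

/-- Column reading word of a filling `T` of the Young diagram `μ` (English
convention, `T i j` the entry in row `i`, column `j`): concatenate the columns
left to right, each read bottom to top. -/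
def colword {N : ℕ} (μ : YoungDiagram) (T : ℕ → ℕ → Fin N) : List (Fin N) :=
  (List.range (μ.rowLen 0)).flatMap (fun j =>
    ((List.range (μ.colLen j)).reverse).map (fun i => T i j))

/-- Diagonal reading word of a filling `T` of `μ`: concatenate the diagonals
`{(i,j) : j - i = d}` starting from the southwesternmost (most negative `d`),
reading each diagonal in the southeast direction (increasing `i`). -/
def diagread {N : ℕ} (μ : YoungDiagram) (T : ℕ → ℕ → Fin N) : List (Fin N) :=
  (List.range (μ.colLen 0 + μ.rowLen 0 - 1)).flatMap (fun t =>
    (List.range (μ.colLen 0)).filterMap (fun (i : ℕ) =>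
      let jz : ℤ := (i : ℤ) + ((t : ℤ) - ((μ.colLen 0 : ℤ) - 1))
      if 0 ≤ jz ∧ ((i, jz.toNat) : ℕ × ℕ) ∈ μ then some (T i jz.toNat) else none))

variable {N : ℕ}

def rel (N : ℕ) (x y : FreeAlgebra ℤ (Fin N)) : Prop :=
  x - y ∈ TwoSidedIdeal.span (genB N)

lemma rel_refl (x : FreeAlgebra ℤ (Fin N)) : rel N x x := by
  simp [rel]

lemma rel_of_eq {x y : FreeAlgebra ℤ (Fin N)} (h : x = y) : rel N x y := h ▸ rel_refl x

lemma rel_trans {x y z : FreeAlgebra ℤ (Fin N)} (h1 : rel N x y) (h2 : rel N y z) :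
    rel N x z := by
  have := TwoSidedIdeal.add_mem _ h1 h2
  simpa [rel] using this

lemma rel_mul_left (a : FreeAlgebra ℤ (Fin N)) {x y} (h : rel N x y) :
    rel N (a * x) (a * y) := by
  have := TwoSidedIdeal.mul_mem_left _ a (x - y) h
  simpa [rel, mul_sub] using this

lemma rel_mul_right (a : FreeAlgebra ℤ (Fin N)) {x y} (h : rel N x y) :
    rel N (x * a) (y * a) := by
  have := TwoSidedIdeal.mul_mem_right _ (x - y) a h
  simpa [rel, sub_mul] using this

lemma mon_nil : mon ([] : List (Fin N)) = 1 := rfl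

lemma mon_append (u v : List (Fin N)) : mon (u ++ v) = mon u * mon v := by
  simp [mon]

lemma mon_cons (a : Fin N) (u : List (Fin N)) : mon (a :: u) = ι ℤ a * mon u := by
  simp [mon]

lemma rel_mon_context (p q : List (Fin N)) {u v : List (Fin N)}
    (h : rel N (mon u) (mon v)) :
    rel N (mon (p ++ u ++ q)) (mon (p ++ v ++ q)) := by
  rw [mon_append, mon_append, mon_append, mon_append]
  exact rel_mul_right _ (rel_mul_left _ h)

/-- the basic swap: `x y w ≈ y x w` when `x < w < y`, with right context. -/
lemma rel_swap {x y w : Fin N} (h1 : x < w) (h2 : w < y) (q : List (Fin N)) :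
    rel N (mon (x :: y :: w :: q)) (mon (y :: x :: w :: q)) := by
  have hgen : (ι ℤ x * ι ℤ y * ι ℤ w - ι ℤ y * ι ℤ x * ι ℤ w : FreeAlgebra ℤ (Fin N))
      ∈ TwoSidedIdeal.span (genB N) := by
    apply TwoSidedIdeal.subset_span
    exact Or.inr ⟨x, w, y, h1, h2, rfl⟩
  have := TwoSidedIdeal.mul_mem_right _ _ (mon q) hgen
  rw [sub_mul] at this
  have heq : mon (x :: y :: w :: q) = ι ℤ x * ι ℤ y * ι ℤ w * mon q := by
    simp [mon_cons, mul_assoc]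
  have heq2 : mon (y :: x :: w :: q) = ι ℤ y * ι ℤ x * ι ℤ w * mon q := by
    simp [mon_cons, mul_assoc]
  rw [rel, heq, heq2]
  exact this


open FreeAlgebra

variable {N : ℕ}

lemma rel_of_list_eq {u v : List (Fin N)} (h : u = v) : rel N (mon u) (mon v) :=
  rel_of_eq (by rw [h])

/-- Lemma F: a single letter `x` passes to the right of a strictly decreasing
block `Y`, landing in front of `z`. -/
lemma relF (Y : List (Fin N)) (x z : Fin N) (q : List (Fin N))
    (hY : Y.Pairwise (· > ·)) (hzY : ∀ y ∈ Y, z < y) (hxz : x < z) :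
    rel N (mon (x :: (Y ++ z :: q))) (mon (Y ++ x :: z :: q)) := by
  induction Y generalizing q with
  | nil => exact rel_refl _
  | cons y Y' ih =>
    have hzy : z < y := hzY y (List.mem_cons_self)
    have hstep : rel N (mon (x :: y :: (Y' ++ z :: q))) (mon (y :: x :: (Y' ++ z :: q))) := by
      cases Y' with
      | nil => exact rel_swap hxz hzy q
      | cons y' Y'' =>
        have hy' : z < y' := hzY y' (by simp)
        have hyy' : y' < y := (List.pairwise_cons.mp hY).1 y' (by simp)
        exact rel_swap (lt_trans hxz hy') hyy' _
    have htail : rel N (mon (y :: (x :: (Y' ++ z :: q)))) (mon (y :: (Y' ++ x :: z :: q))) := by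
      rw [mon_cons, mon_cons]
      exact rel_mul_left _ (ih q (List.pairwise_cons.mp hY).2
        (fun u hu => hzY u (by simp [hu])))
    exact rel_trans hstep htail

/-- Lemma G: an increasing word `H` passes to the right of a decreasing block `Y`,
landing in front of `z`. -/
lemma relG (H : List (Fin N)) (Y : List (Fin N)) (z : Fin N) (q : List (Fin N))
    (hH : H.Pairwise (· < ·)) (hY : Y.Pairwise (· > ·))
    (hHz : ∀ h ∈ H, h < z) (hzY : ∀ y ∈ Y, z < y) :
    rel N (mon (H ++ Y ++ z :: q)) (mon (Y ++ H ++ z :: q)) := by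
  induction H using List.reverseRecOn generalizing z q with
  | nil => exact rel_of_list_eq (by simp)
  | append_singleton H' a ih =>
    have haz : a < z := hHz a (by simp)
    have hpw := List.pairwise_append.mp hH
    have h1 : rel N (mon ((H' ++ [a]) ++ Y ++ z :: q)) (mon (H' ++ Y ++ a :: z :: q)) := by
      have hF := relF Y a z q hY hzY haz
      have h := rel_mon_context H' [] hF
      refine rel_trans (rel_of_list_eq ?_) (rel_trans h (rel_of_list_eq ?_)) <;> simp
    have h2 : rel N (mon (H' ++ Y ++ a :: z :: q)) (mon (Y ++ (H' ++ [a]) ++ z :: q)) := by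
      have := ih a (z :: q) hpw.1 (fun h hh => hpw.2.2 h hh a (by simp)) (fun y hy => lt_trans haz (hzY y hy))
      refine rel_trans this (rel_of_list_eq ?_)
      simp
    exact rel_trans h1 h2

/-- The insertion lemma: a decreasing block `ctop :: c_ℓ ⋯ c_1` distributes from the
right of increasing words `H_ℓ ⋯ H_1` into the interleaving. -/
lemma relINS (ps : List (List (Fin N) × Fin N)) (ctop : Fin N) (R : List (Fin N))
    (h1 : ∀ p ∈ ps, p.1.Pairwise (· < ·))
    (h2 : ∀ p ∈ ps, ∀ h ∈ p.1, h < p.2)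
    (h3 : (ps.map Prod.snd ++ [ctop]).Pairwise (· < ·)) :
    rel N (mon ((ps.map Prod.fst).reverse.flatten ++ (ctop :: (ps.map Prod.snd).reverse) ++ R))
        (mon (ctop :: (ps.map (fun p => p.1 ++ [p.2])).reverse.flatten ++ R)) := by
  induction ps generalizing R with
  | nil => exact rel_of_list_eq (by simp)
  | cons p ps' ih =>
    obtain ⟨H, c⟩ := p
    have h3' := h3
    rw [List.map_cons, List.cons_append, List.pairwise_cons] at h3'
    set C := (ps'.map Prod.fst).reverse.flatten with hC
    set Y := ctop :: (ps'.map Prod.snd).reverse with hYdef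
    have hYpw : Y.Pairwise (· > ·) := by
      have : Y.reverse.Pairwise (· < ·) := by
        simpa [hYdef, List.reverse_cons] using h3'.2
      simpa [List.pairwise_reverse] using this
    have hzY : ∀ y ∈ Y, c < y := by
      intro y hy
      rw [hYdef, List.mem_cons, List.mem_reverse] at hy
      rcases hy with hy | hy
      · exact hy ▸ h3'.1 ctop (by simp)
      · exact h3'.1 y (by simp [hy])
    have hG : rel N (mon (H ++ Y ++ c :: R)) (mon (Y ++ H ++ c :: R)) :=
      relG H Y c R (h1 (H, c) (List.mem_cons_self)) hYpw
        (fun h hh => h2 (H, c) (List.mem_cons_self) h hh) hzY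
    have hGc : rel N (mon (C ++ (H ++ Y ++ c :: R))) (mon (C ++ (Y ++ H ++ c :: R))) := by
      have := rel_mon_context C [] hG
      refine rel_trans (rel_of_list_eq ?_) (rel_trans this (rel_of_list_eq ?_)) <;> simp
    have hIH := ih (H ++ c :: R) (fun p hp => h1 p (by simp [hp]))
      (fun p hp => h2 p (by simp [hp])) (by
        have := h3'.2
        simpa using this)
    refine rel_trans (rel_of_list_eq ?_) (rel_trans hGc (rel_trans (rel_trans (rel_of_list_eq ?_) hIH) (rel_of_list_eq ?_)))
    · simp [hC, hYdef]
    · simp [hC, hYdef]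
    · simp

/-! ### List helpers -/

lemma mem_range1 {s n m : ℕ} : m ∈ List.range' s n ↔ s ≤ m ∧ m < s + n := by
  rw [List.mem_range']
  constructor
  · rintro ⟨i, h, rfl⟩; omega
  · intro h; exact ⟨m - s, by omega, by omega⟩

lemma revmap {α : Type*} (f : ℕ → α) (n : ℕ) :
    ((List.range n).map f).reverse = (List.range n).map (fun k => f (n - 1 - k)) := by
  induction n generalizing f with
  | zero => rfl
  | succ n ih =>
    conv_lhs => rw [List.range_succ_eq_map (n := n)]
    conv_rhs => rw [List.range_succ]
    rw [List.map_cons, List.reverse_cons, List.map_map, ih (f ∘ Nat.succ),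
      List.map_append]
    congr 1
    · apply List.map_congr_left
      intro k hk
      rw [List.mem_range] at hk
      simp only [Function.comp]
      congr 1
      omega
    · simp

lemma pairwise_map_range' {α : Type*} (S : α → α → Prop) (f : ℕ → α) (s n : ℕ)
    (h : ∀ x y, s ≤ x → x < y → y < s + n → S (f x) (f y)) :
    ((List.range' s n).map f).Pairwise S := by
  rw [List.pairwise_map, List.pairwise_iff_getElem]
  intro i j hi hj hij
  simp only [List.length_range'] at hi hj
  simp only [List.getElem_range']
  exact h _ _ (by omega) (by omega) (by omega)

lemma filterMap_ite_interval {α : Type*} (g : ℕ → α) (P : ℕ → Prop) [DecidablePred P]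
    (Lb a b : ℕ) (hab : a ≤ b) (hbL : b ≤ Lb)
    (hiff : ∀ x, x < Lb → (P x ↔ a ≤ x ∧ x < b)) :
    (List.range Lb).filterMap (fun x => if P x then some (g x) else none)
      = (List.range' a (b - a)).map g := by
  have hsplit : List.range Lb
      = List.range' 0 a ++ List.range' a (b - a) ++ List.range' b (Lb - b) := by
    rw [List.range_eq_range']
    have e1 := List.range'_append_1 (s := 0) (m := a) (n := b - a)
    have e2 := List.range'_append_1 (s := 0) (m := b) (n := Lb - b)
    rw [Nat.zero_add] at e1 e2
    rw [show a + (b - a) = b by omega] at e1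
    rw [show b + (Lb - b) = Lb by omega] at e2
    rw [e1, e2]
  rw [hsplit, List.filterMap_append, List.filterMap_append]
  have h1 : (List.range' 0 a).filterMap
      (fun x => if P x then some (g x) else none) = [] := by
    rw [List.filterMap_eq_nil_iff]
    intro x hx
    rw [mem_range1] at hx
    rw [if_neg]
    intro hP
    have := (hiff x (by omega)).mp hP
    omega
  have h3 : (List.range' b (Lb - b)).filterMap
      (fun x => if P x then some (g x) else none) = [] := by
    rw [List.filterMap_eq_nil_iff]
    intro x hx
    rw [mem_range1] at hx
    rw [if_neg]
    intro hP
    have := (hiff x (by omega)).mp hP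
    omega
  have h2 : (List.range' a (b - a)).filterMap
      (fun x => if P x then some (g x) else none) = (List.range' a (b - a)).map g := by
    rw [List.filterMap_congr (g := fun x => some (g x)) ?_]
    · exact List.filterMap_eq_map (f := g) ▸ rfl
    · intro x hx
      rw [mem_range1] at hx
      rw [if_pos]
      exact (hiff x (by omega)).mpr ⟨by omega, by omega⟩
  rw [h1, h2, h3, List.nil_append, List.append_nil]

/-! ### Truncated reading words -/

section Tableau

variable {N : ℕ} (μ : YoungDiagram) (T : ℕ → ℕ → Fin N)

/-- Column word of column `j`. -/
def colWd (j : ℕ) : List (Fin N) :=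
  ((List.range (μ.colLen j)).reverse).map (fun i => T i j)

/-- Word of diagonal number `t`, truncated to columns `< m`. -/
def DgT (m t : ℕ) : List (Fin N) :=
  (List.range (μ.colLen 0)).filterMap (fun (i : ℕ) =>
    if (0:ℤ) ≤ (i : ℤ) + ((t : ℤ) - ((μ.colLen 0 : ℤ) - 1))
        ∧ ((i, ((i : ℤ) + ((t : ℤ) - ((μ.colLen 0 : ℤ) - 1))).toNat) : ℕ × ℕ) ∈ μ
        ∧ ((i : ℤ) + ((t : ℤ) - ((μ.colLen 0 : ℤ) - 1))).toNat < m
      then some (T i ((i : ℤ) + ((t : ℤ) - ((μ.colLen 0 : ℤ) - 1))).toNat) else none)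

/-- Diagonal reading word truncated to columns `< m`. -/
def dread (m : ℕ) : List (Fin N) :=
  (List.range (μ.colLen 0 + μ.rowLen 0 - 1)).flatMap (DgT μ T m)

/-- Column reading word truncated to columns `< m`. -/
def cword (m : ℕ) : List (Fin N) :=
  (List.range m).flatMap (colWd μ T)

lemma colword_eq : colword μ T = cword μ T (μ.rowLen 0) := rfl

lemma diagread_eq : diagread μ T = dread μ T (μ.rowLen 0) := by
  unfold diagread dread DgT
  simp only [List.bind_eq_flatMap, List.pure_def, List.flatMap_assoc, List.flatMap_singleton]
  apply List.flatMap_congr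
  intro t _
  apply List.filterMap_congr
  intro i _
  apply if_congr _ rfl rfl
  constructor
  · rintro ⟨h0, hmem⟩
    refine ⟨h0, hmem, ?_⟩
    have h1 := YoungDiagram.mem_iff_lt_rowLen.mp hmem
    have h2 := μ.rowLen_anti 0 i (Nat.zero_le i)
    omega
  · rintro ⟨h0, hmem, _⟩
    exact ⟨h0, hmem⟩

end Tableau

section Mono

variable {N : ℕ} {μ : YoungDiagram} {T : ℕ → ℕ → Fin N}
variable (hrow : ∀ i j : ℕ, (i, j + 1) ∈ μ → T i j ≤ T i (j + 1))
variable (hcol : ∀ i j : ℕ, (i + 1, j) ∈ μ → T i j < T (i + 1) j)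

include hrow in
lemma T_row_le {i j j' : ℕ} (hj : j ≤ j') : (i, j') ∈ μ → T i j ≤ T i j' := by
  induction j', hj using Nat.le_induction with
  | base => intro _; exact le_refl _
  | succ n hn ih =>
    intro hm
    exact le_trans (ih (μ.up_left_mem (le_refl i) (Nat.le_succ n) hm)) (hrow i n hm)

include hcol in
lemma T_col_lt {i i' j : ℕ} (hi : i + 1 ≤ i') : (i', j) ∈ μ → T i j < T i' j := by
  induction i', hi using Nat.le_induction with
  | base => intro hm; exact hcol i j hm
  | succ n hn ih =>
    intro hm
    exact lt_trans (ih (μ.up_left_mem (Nat.le_succ n) (le_refl j) hm)) (hcol n j hm)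

include hrow hcol in
lemma T_lt {i i' j j' : ℕ} (hi : i < i') (hj : j ≤ j') (hm : (i', j') ∈ μ) :
    T i j < T i' j' :=
  lt_of_le_of_lt (T_row_le hrow hj (μ.up_left_mem (le_of_lt hi) (le_refl j') hm))
    (T_col_lt hcol hi hm)

end Mono

section DgTlemmas

variable {N : ℕ} (μ : YoungDiagram) (T : ℕ → ℕ → Fin N)

lemma DgT_explicit (m i e : ℕ) (him : (i, m) ∈ μ) (he : e ≤ 1) :
    DgT μ T (m + e) (μ.colLen 0 - 1 - i + m)
      = (List.range' (i - m) (min i m + e)).map (fun x => T x (x + m - i)) := by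
  have hiL : i + 1 ≤ μ.colLen 0 := by
    have h1 := YoungDiagram.mem_iff_lt_colLen.mp him
    have h2 := μ.colLen_anti 0 m (Nat.zero_le m)
    omega
  set L := μ.colLen 0 with hL
  have hc : ((L - 1 - i + m : ℕ) : ℤ) = (L : ℤ) - 1 - i + m := by omega
  rw [DgT]
  rw [filterMap_ite_interval
    (fun x => T x (((x : ℤ) + (((L - 1 - i + m : ℕ) : ℤ) - ((L : ℤ) - 1))).toNat))
    (fun x => (0:ℤ) ≤ (x : ℤ) + (((L - 1 - i + m : ℕ) : ℤ) - ((L : ℤ) - 1))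
        ∧ ((x, ((x : ℤ) + (((L - 1 - i + m : ℕ) : ℤ) - ((L : ℤ) - 1))).toNat) : ℕ × ℕ) ∈ μ
        ∧ ((x : ℤ) + (((L - 1 - i + m : ℕ) : ℤ) - ((L : ℤ) - 1))).toNat < m + e)
    L (i - m) (i + e) (by omega) (by omega) ?_]
  · rw [show i + e - (i - m) = min i m + e by omega]
    apply List.map_congr_left
    intro x _
    congr 1
    omega
  · intro x hx
    have htn : ((x : ℤ) + (((L - 1 - i + m : ℕ) : ℤ) - ((L : ℤ) - 1))).toNat = x + m - i := by
      omega
    constructor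
    · rintro ⟨h0, hmem, hlt⟩
      omega
    · rintro ⟨hax, hxb⟩
      refine ⟨by omega, ?_, by omega⟩
      rw [htn]
      exact μ.up_left_mem (by omega) (by omega) him

lemma DgT_succ_col (m i : ℕ) (him : (i, m) ∈ μ) :
    DgT μ T (m + 1) (μ.colLen 0 - 1 - i + m)
      = DgT μ T m (μ.colLen 0 - 1 - i + m) ++ [T i m] := by
  have h1 := DgT_explicit μ T m i 1 him (by omega)
  have h0 := DgT_explicit μ T m i 0 him (by omega)
  rw [Nat.add_zero] at h0
  rw [h1, h0]
  have hsplit : List.range' (i - m) (min i m + 1)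
      = List.range' (i - m) (min i m) ++ [(i - m) + min i m] := by
    have h := List.range'_append_1 (s := i - m) (m := min i m) (n := 1)
    rw [show List.range' ((i-m) + min i m) 1 = [(i-m) + min i m] from rfl] at h
    rw [← h]
  rw [hsplit, List.map_append]
  congr 1
  simp only [List.map_cons, List.map_nil]
  congr 2
  · omega
  · omega

lemma DgT_eq_nil (m t : ℕ) (h : (μ.colLen 0 : ℤ) - 1 + m ≤ t) : DgT μ T m t = [] := by
  rw [DgT, List.filterMap_eq_nil_iff]
  intro x _
  rw [if_neg]
  rintro ⟨h0, hmem, hlt⟩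
  omega

lemma DgT_succ_eq (m t : ℕ)
    (h : ∀ x : ℕ, x < μ.colLen 0 →
      ((x : ℤ) + ((t : ℤ) - ((μ.colLen 0 : ℤ) - 1))).toNat = m → (x, m) ∉ μ) :
    DgT μ T (m + 1) t = DgT μ T m t := by
  unfold DgT
  apply List.filterMap_congr
  intro x hx
  rw [List.mem_range] at hx
  apply if_congr _ rfl rfl
  constructor
  · rintro ⟨h0, hmem, hlt⟩
    refine ⟨h0, hmem, ?_⟩
    by_cases hcase : ((x : ℤ) + ((t : ℤ) - ((μ.colLen 0 : ℤ) - 1))).toNat = m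
    · rw [hcase] at hmem
      exact absurd hmem (h x hx hcase)
    · omega
  · rintro ⟨h0, hmem, hlt⟩
    exact ⟨h0, hmem, by omega⟩

end DgTlemmas

section Step

lemma range_split (a b c : ℕ) (hab : a ≤ b) (hbc : b ≤ c) :
    List.range c = List.range a ++ List.range' a (b - a) ++ List.range' b (c - b) := by
  simp only [List.range_eq_range']
  have e1 := List.range'_append_1 (s := 0) (m := a) (n := b - a)
  rw [Nat.zero_add, show a + (b - a) = b by omega] at e1
  have e2 := List.range'_append_1 (s := 0) (m := b) (n := c - b)
  rw [Nat.zero_add, show b + (c - b) = c by omega] at e2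
  rw [e1, e2]

variable {N : ℕ} {μ : YoungDiagram} {T : ℕ → ℕ → Fin N}

lemma step_rel
    (hrow : ∀ i j : ℕ, (i, j + 1) ∈ μ → T i j ≤ T i (j + 1))
    (hcol : ∀ i j : ℕ, (i + 1, j) ∈ μ → T i j < T (i + 1) j) (m : ℕ) :
    rel N (mon (dread μ T m ++ colWd μ T m)) (mon (dread μ T (m + 1))) := by
  by_cases hr0 : μ.colLen m = 0
  · have hcolW : colWd μ T m = [] := by rw [colWd, hr0]; rfl
    apply rel_of_list_eq
    rw [hcolW, List.append_nil, dread, dread]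
    refine (List.flatMap_congr (fun t _ => ?_)).symm
    apply DgT_succ_eq
    intro x hx htn hmem
    have := YoungDiagram.mem_iff_lt_colLen.mp hmem
    omega
  -- main case
  set L := μ.colLen 0 with hLdef
  set r := μ.colLen m with hrdef
  set R0 := μ.rowLen 0 with hR0def
  set K := L + R0 - 1 with hKdef
  set a := L - r + m + 1 with hadef
  have hr : 1 ≤ r := by omega
  have him : ∀ i, i < r → (i, m) ∈ μ := fun i hi => YoungDiagram.mem_iff_lt_colLen.mpr hi
  have hrL : r ≤ L := μ.colLen_anti 0 m (Nat.zero_le m)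
  have hmR : m < R0 := YoungDiagram.mem_iff_lt_rowLen.mp (him 0 hr)
  have hm0 : m = 0 → r = L := by
    intro h
    rw [hrdef, hLdef, h]
  set ps : List (List (Fin N) × Fin N) :=
    (List.range (r - 1)).map (fun i => (DgT μ T m (L - 1 - i + m), T i m)) with hpsdef
  set ctop : Fin N := T (r - 1) m with hctopdef
  set C : List (Fin N) := (List.range a).flatMap (DgT μ T m) with hCdef
  -- the hypotheses of the insertion lemma
  have h1 : ∀ p ∈ ps, p.1.Pairwise (· < ·) := by
    intro p hp
    rw [hpsdef, List.mem_map] at hp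
    obtain ⟨i, hi, rfl⟩ := hp
    rw [List.mem_range] at hi
    have hexp := DgT_explicit μ T m i 0 (him i (by omega)) (by omega)
    rw [Nat.add_zero] at hexp
    rw [hexp]
    apply pairwise_map_range'
    intro x y hx hxy hy
    exact T_lt hrow hcol hxy (by omega)
      (μ.up_left_mem (by omega) (by omega) (him i (by omega)))
  have h2 : ∀ p ∈ ps, ∀ h ∈ p.1, h < p.2 := by
    intro p hp
    rw [hpsdef, List.mem_map] at hp
    obtain ⟨i, hi, rfl⟩ := hp
    rw [List.mem_range] at hi
    have hexp := DgT_explicit μ T m i 0 (him i (by omega)) (by omega)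
    rw [Nat.add_zero] at hexp
    rw [hexp]
    intro h hh
    rw [List.mem_map] at hh
    obtain ⟨x, hx, rfl⟩ := hh
    rw [mem_range1] at hx
    exact T_lt hrow hcol (by omega) (by omega) (him i (by omega))
  have hsnd : ps.map Prod.snd = (List.range (r - 1)).map (fun i => T i m) := by
    rw [hpsdef, List.map_map]
    rfl
  have h3 : (ps.map Prod.snd ++ [ctop]).Pairwise (· < ·) := by
    rw [hsnd, hctopdef]
    have : (List.range (r - 1)).map (fun i => T i m) ++ [T (r - 1) m]
        = (List.range r).map (fun i => T i m) := by
      conv_rhs => rw [show r = (r - 1) + 1 by omega, List.range_succ]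
      rw [List.map_append]
      rfl
    rw [this, List.range_eq_range']
    apply pairwise_map_range'
    intro x y hx hxy hy
    exact T_col_lt hcol (by omega) (him y (by omega))
  -- decomposition of `dread m`
  have hsplit : List.range K
      = List.range a ++ List.range' a (r - 1) ++ List.range' (L + m) (K - (L + m)) := by
    have := range_split a (L + m) K (by omega) (by omega)
    rw [show L + m - a = r - 1 by omega] at this
    exact this
  have htail_m : (List.range' (L + m) (K - (L + m))).flatMap (DgT μ T m) = [] := by
    rw [List.flatMap_eq_nil_iff]
    intro t ht
    rw [mem_range1] at ht
    exact DgT_eq_nil μ T m t (by omega)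
  have htail_m1 : (List.range' (L + m) (K - (L + m))).flatMap (DgT μ T (m + 1)) = [] := by
    rw [List.flatMap_eq_nil_iff]
    intro t ht
    rw [mem_range1] at ht
    exact DgT_eq_nil μ T (m + 1) t (by omega)
  have eq_dm : dread μ T m = C ++ (List.range' a (r - 1)).flatMap (DgT μ T m) := by
    rw [dread, ← hLdef, ← hR0def, ← hKdef, hsplit, List.flatMap_append, List.flatMap_append,
      htail_m, List.append_nil, hCdef]
  -- head part of `dread (m+1)`
  have eq_head : (List.range a).flatMap (DgT μ T (m + 1)) = C ++ [ctop] := by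
    conv_lhs => rw [show a = (a - 1) + 1 by omega, List.range_succ]
    rw [List.flatMap_append, List.flatMap_singleton]
    have hpre : (List.range (a - 1)).flatMap (DgT μ T (m + 1))
        = (List.range (a - 1)).flatMap (DgT μ T m) := by
      apply List.flatMap_congr
      intro t ht
      rw [List.mem_range] at ht
      apply DgT_succ_eq
      intro x hx htn hmem
      have := YoungDiagram.mem_iff_lt_colLen.mp hmem
      omega
    have hlast : DgT μ T (m + 1) (a - 1) = DgT μ T m (a - 1) ++ [ctop] := by
      have := DgT_succ_col μ T m (r - 1) (him (r - 1) (by omega))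
      rw [show L - 1 - (r - 1) + m = a - 1 by omega] at this
      rw [this, hctopdef]
    rw [hpre, hlast]
    conv_rhs => rw [hCdef, show a = (a - 1) + 1 by omega, List.range_succ]
    rw [List.flatMap_append, List.flatMap_singleton]
    simp
  have eq_dm1 : dread μ T (m + 1)
      = (C ++ [ctop]) ++ (List.range' a (r - 1)).flatMap (DgT μ T (m + 1)) := by
    rw [dread, ← hLdef, ← hR0def, ← hKdef, hsplit, List.flatMap_append, List.flatMap_append,
      htail_m1, List.append_nil, eq_head]
  -- middle parts
  have eq_mid : (List.range' a (r - 1)).flatMap (DgT μ T m)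
      = (ps.map Prod.fst).reverse.flatten := by
    rw [hpsdef, List.map_map]
    rw [show (Prod.fst ∘ fun i => (DgT μ T m (L - 1 - i + m), T i m))
        = (fun i => DgT μ T m (L - 1 - i + m)) from rfl]
    rw [revmap, ← List.flatMap_def, List.range'_eq_map_range, List.flatMap_map]
    apply List.flatMap_congr
    intro k hk
    rw [List.mem_range] at hk
    congr 1
    omega
  have eq_mid1 : (List.range' a (r - 1)).flatMap (DgT μ T (m + 1))
      = (ps.map (fun p => p.1 ++ [p.2])).reverse.flatten := by
    rw [hpsdef, List.map_map]
    rw [show ((fun p : List (Fin N) × Fin N => p.1 ++ [p.2])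
          ∘ fun i => (DgT μ T m (L - 1 - i + m), T i m))
        = (fun i => DgT μ T m (L - 1 - i + m) ++ [T i m]) from rfl]
    rw [revmap, ← List.flatMap_def, List.range'_eq_map_range, List.flatMap_map]
    apply List.flatMap_congr
    intro k hk
    rw [List.mem_range] at hk
    have := DgT_succ_col μ T m (r - 1 - 1 - k) (him (r - 1 - 1 - k) (by omega))
    rw [show L - 1 - (r - 1 - 1 - k) + m = a + k by omega] at this
    rw [show L - 1 - (r - 1 - 1 - k) + m = a + k by omega]
    exact this
  have eq_colW : colWd μ T m = ctop :: (ps.map Prod.snd).reverse := by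
    rw [colWd, ← hrdef, hsnd, hctopdef, List.map_reverse]
    conv_lhs => rw [show r = (r - 1) + 1 by omega, List.range_succ]
    rw [List.map_append, List.reverse_append]
    rfl
  -- assembly
  have hINS := relINS ps ctop [] h1 h2 h3
  refine rel_trans (rel_of_list_eq ?_)
    (rel_trans (rel_mon_context C [] hINS) (rel_of_list_eq ?_))
  · rw [eq_dm, eq_mid, eq_colW]
    simp
  · rw [eq_dm1, eq_mid1]
    simp

end Step

section Main

variable {N : ℕ} {μ : YoungDiagram} {T : ℕ → ℕ → Fin N}

lemma DgT_zero (t : ℕ) : DgT μ T 0 t = ([] : List (Fin N)) := by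
  rw [DgT, List.filterMap_eq_nil_iff]
  intro x _
  rw [if_neg]
  rintro ⟨_, _, h⟩
  omega

lemma main_rel
    (hrow : ∀ i j : ℕ, (i, j + 1) ∈ μ → T i j ≤ T i (j + 1))
    (hcol : ∀ i j : ℕ, (i + 1, j) ∈ μ → T i j < T (i + 1) j) (m : ℕ) :
    rel N (mon (cword μ T m)) (mon (dread μ T m)) := by
  induction m with
  | zero =>
    apply rel_of_list_eq
    rw [cword, dread]
    rw [List.flatMap_eq_nil_iff.mpr (fun t _ => DgT_zero t)]
    rfl
  | succ m ih =>
    have hcw : cword μ T (m + 1) = cword μ T m ++ colWd μ T m := by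
      rw [cword, List.range_succ, List.flatMap_append, List.flatMap_singleton, cword]
    have h1 : rel N (mon (cword μ T m ++ colWd μ T m)) (mon (dread μ T m ++ colWd μ T m)) := by
      have := rel_mon_context [] (colWd μ T m) ih
      simpa using this
    rw [hcw]
    exact rel_trans h1 (step_rel hrow hcol m)

end Main


/-- For any semistandard Young tableau `T` (rows weakly increasing, columns
strictly increasing), `u_{colword(T)} ≡ u_{diagread(T)} (mod I_B)`. -/
theorem stmt15 (N : ℕ) (μ : YoungDiagram) (T : ℕ → ℕ → Fin N)
    (hrow : ∀ i j : ℕ, (i, j + 1) ∈ μ → T i j ≤ T i (j + 1))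
    (hcol : ∀ i j : ℕ, (i + 1, j) ∈ μ → T i j < T (i + 1) j) :
    mon (colword μ T) - mon (diagread μ T) ∈ TwoSidedIdeal.span (genB N) := by
  have : rel N (mon (colword μ T)) (mon (diagread μ T)) := by
    rw [colword_eq, diagread_eq]
    exact main_rel hrow hcol (μ.rowLen 0)
  exact this
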